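/- Fix δ ≥ 3 and t with 3 ≤ t ≤ δ such that t−1 divides δ, say δ = (t−1)α. Then there exists k_0(δ) such that for all k ≥ k_0(δ) and all m ∈ ℕ: if G is any graph on n = mtα vertices with minimum degree at least δ, then hom(G, kK_t) ≤ hom(m·T_t(tα), kK_t) = (t! k)^m, with equality if and only if G is the disjoint union of m copies of T_t(tα). -/

import Mathlib

/-- The number of graph homomorphisms from a simple graph `G` to the (possibly looped)
graph given by the relation `H`. -/
noncomputable def homCount {V W : Type*} (G : SimpleGraph V) (H : W → W → Prop) : ℕ :=
  Nat.card {f : V → W // ∀ u v, G.Adj u v → H (f u) (f v)}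

/-- The degree of a vertex `v` in the (possibly looped) graph `H`: a loop counts once. -/
noncomputable def relDeg {W : Type*} (H : W → W → Prop) (v : W) : ℕ :=
  Nat.card {w // H v w}

/-- The maximum degree of the (possibly looped) graph `H`. -/
noncomputable def maxDeg {W : Type*} [Fintype W] (H : W → W → Prop) : ℕ :=
  Finset.univ.sup (relDeg H)

/-- The degree of a vertex of a simple graph (no decidability assumptions). -/
noncomputable def nDeg {V : Type*} (G : SimpleGraph V) (v : V) : ℕ :=
  Nat.card {w // G.Adj v w}

/-- `kK_t`: the disjoint union of `k` copies of the complete loopless graph `K_t`. -/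
def kKt (k t : ℕ) : SimpleGraph (Fin k × Fin t) where
  Adj x y := x.1 = y.1 ∧ x.2 ≠ y.2
  symm := ⟨fun _ _ h => ⟨h.1.symm, h.2.symm⟩⟩
  loopless := ⟨fun _ h => h.2 rfl⟩

/-- `m` disjoint copies of the Turán graph `T_t(tα)` (with `t` parts of size `α` each). -/
def mTuran (m t α : ℕ) : SimpleGraph (Fin m × Fin t × Fin α) where
  Adj x y := x.1 = y.1 ∧ x.2.1 ≠ y.2.1
  symm := ⟨fun _ _ h => ⟨h.1.symm, h.2.symm⟩⟩
  loopless := ⟨fun _ h => h.2 rfl⟩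

attribute [local instance] Classical.propDecidable

open SimpleGraph

section Auxiliary

/-- Key numeric inequality. -/
lemma keyineq (t β M b k : ℕ) (ht : 1 ≤ t) (hb : b * (β + 1) ≤ M * β)
    (hM : 1 ≤ M) (hk : t ^ (β * (β + 1)) < k) :
    k ^ b * t ^ (M * β) < k ^ M := by
  have ht0 : 0 < t ^ (β * (β + 1)) := Nat.pow_pos (by omega)
  have hk1 : 1 ≤ k := by omega
  have hbM : b < M := by
    rcases Nat.lt_or_ge b M with h | h
    · exact h
    · exfalso
      have h1 : M * (β + 1) ≤ b * (β + 1) := Nat.mul_le_mul_right _ h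
      have h2 : M * β < M * (β + 1) := by
        have hM0 : 0 < M := hM
        nlinarith
      omega
  have hMb : M ≤ (M - b) * (β + 1) := by
    have h2 : (M - b) * (β + 1) = M * (β + 1) - b * (β + 1) := by
      rw [Nat.sub_mul]
    have h3 : M * (β + 1) = M * β + M := by ring
    omega
  have hexp : M * β ≤ β * (β + 1) * (M - b) := by
    calc M * β ≤ (M - b) * (β + 1) * β := Nat.mul_le_mul_right _ hMb
    _ = β * (β + 1) * (M - b) := by ring
  have h3 : t ^ (M * β) < k ^ (M - b) := by
    calc t ^ (M * β) ≤ t ^ (β * (β + 1) * (M - b)) := Nat.pow_le_pow_right ht hexp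
    _ = (t ^ (β * (β + 1))) ^ (M - b) := by rw [pow_mul]
    _ < k ^ (M - b) := Nat.pow_lt_pow_left hk (by omega)
  calc k ^ b * t ^ (M * β) < k ^ b * k ^ (M - b) := by
        have : 0 < k ^ b := Nat.pow_pos (by omega)
        exact mul_lt_mul_of_pos_left h3 this
  _ = k ^ M := by rw [← pow_add]; congr 1; omega

/-- Size and structure of a properly `t`-colorable graph with minimum degree `(t-1)α`. -/
lemma size_lemma {U : Type} [Fintype U] [Nonempty U] {t α : ℕ} (ht2 : 2 ≤ t) (hα : 0 < α)
    (A : U → U → Prop) (c : U → Fin t) (hc : ∀ u v, A u v → c u ≠ c v)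
    (hdeg : ∀ v, (t - 1) * α ≤ Nat.card {w // A v w}) :
    t * α ≤ Fintype.card U ∧
    (Fintype.card U = t * α →
      (∀ u v, A u v ↔ c u ≠ c v) ∧ ∀ i : Fin t, Fintype.card {v // c v = i} = α) := by
  obtain ⟨t', rfl⟩ : ∃ t', t = t' + 1 := ⟨t - 1, by omega⟩
  have ht' : 1 ≤ t' := by omega
  set s := Fintype.card U with hs
  set δ := ((t' + 1) - 1) * α with hδdef
  have hδ : δ = t' * α := by simp [hδdef]
  set a : Fin (t' + 1) → ℕ := fun i => Fintype.card {v // c v = i} with ha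
  have hsum : ∑ i, a i = s := by
    rw [hs, ← Fintype.card_congr (Equiv.sigmaFiberEquiv c), Fintype.card_sigma]
  have hale : ∀ i, a i ≤ s := fun i => Fintype.card_subtype_le _
  have hdeg2 : ∀ v, Nat.card {w // A v w} ≤ s - a (c v) := by
    intro v
    have hinj : Function.Injective
        (fun w : {w // A v w} => (⟨w.1, fun h => hc v w.1 w.2 h.symm⟩ : {w // ¬ (c w = c v)})) := by
      intro x y h
      have h2 := congrArg Subtype.val h
      exact Subtype.ext h2
    calc Nat.card {w // A v w} ≤ Nat.card {w // ¬ (c w = c v)} :=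
          Nat.card_le_card_of_injective _ hinj
      _ = Fintype.card {w // ¬ (c w = c v)} := Nat.card_eq_fintype_card
      _ = s - a (c v) := by rw [Fintype.card_subtype_compl]
  have hδs : δ ≤ s := by
    have v0 := Classical.arbitrary U
    have := le_trans (hdeg v0) (hdeg2 v0)
    omega
  have key : ∀ i, a i ≤ s - δ := by
    intro i
    by_cases hne : ∃ v, c v = i
    · obtain ⟨v, rfl⟩ := hne
      have := le_trans (hdeg v) (hdeg2 v)
      have := hale (c v)
      omega
    · have : a i = 0 := by
        rw [ha]
        exact Fintype.card_eq_zero_iff.mpr ⟨fun x => hne ⟨x.1, x.2⟩⟩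
      omega
  have hs1 : s ≤ (t' + 1) * (s - δ) := by
    calc s = ∑ i, a i := hsum.symm
      _ ≤ ∑ _i : Fin (t' + 1), (s - δ) := Finset.sum_le_sum (fun i _ => key i)
      _ = (t' + 1) * (s - δ) := by
        rw [Finset.sum_const, Finset.card_univ, Fintype.card_fin, smul_eq_mul]
  have hmain : (t' + 1) * α ≤ s := by
    have h3 : (t' + 1) * (s - δ) + (t' + 1) * δ = (t' + 1) * s := by
      rw [← Nat.mul_add, Nat.sub_add_cancel hδs]
    have h4 : s + (t' + 1) * δ ≤ (t' + 1) * s := by omega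
    have h5 : (t' + 1) * s = t' * s + s := by ring
    have h6 : (t' + 1) * δ = t' * ((t' + 1) * α) := by rw [hδ]; ring
    have h7 : t' * ((t' + 1) * α) ≤ t' * s := by omega
    exact Nat.le_of_mul_le_mul_left h7 (by omega)
  refine ⟨hmain, fun hse => ?_⟩
  have hsδα : s = δ + α := by rw [hse, hδ]; ring
  have ha' : ∀ i, a i ≤ α := fun i => by have := key i; omega
  have hall : ∀ i, a i = α := by
    by_contra h
    push_neg at h
    obtain ⟨j, hj⟩ := h
    have hjlt : a j < α := lt_of_le_of_ne (ha' j) hj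
    have : ∑ i, a i < ∑ _i : Fin (t' + 1), α :=
      Finset.sum_lt_sum (fun i _ => ha' i) ⟨j, Finset.mem_univ j, hjlt⟩
    rw [hsum, Finset.sum_const, Finset.card_univ, Fintype.card_fin, smul_eq_mul] at this
    omega
  have hstruct : ∀ v w, A v w ↔ ¬ (c w = c v) := by
    intro v
    have hNcard : (Finset.univ.filter (A v)).card = Nat.card {w // A v w} := by
      rw [Nat.card_eq_fintype_card, Fintype.card_subtype]
    have hDcard : (Finset.univ.filter (fun w => ¬ (c w = c v))).card = δ := by
      have h8 : Fintype.card {x // c x = c v} = α := hall (c v)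
      rw [← Fintype.card_subtype, Fintype.card_subtype_compl, h8]
      omega
    have hsub : Finset.univ.filter (A v) ⊆ Finset.univ.filter (fun w => ¬ (c w = c v)) := by
      intro w hw
      simp only [Finset.mem_filter, Finset.mem_univ, true_and] at hw ⊢
      exact fun h => hc v w hw h.symm
    have hcard : (Finset.univ.filter (fun w => ¬ (c w = c v))).card ≤
        (Finset.univ.filter (A v)).card := by
      rw [hDcard, hNcard]
      exact hdeg v
    have heq := Finset.eq_of_subset_of_card_le hsub hcard
    intro w
    constructor
    · intro hA h; exact hc v w hA h.symm
    · intro h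
      have : w ∈ Finset.univ.filter (A v) := by
        rw [heq]; simp only [Finset.mem_filter, Finset.mem_univ, true_and]; exact h
      simpa using this
  refine ⟨fun u v => (hstruct u v).trans ?_, fun i => hall i⟩
  constructor <;> (intro h h2; exact h h2.symm)

/-- A graph whose adjacency is "different color", with all `t` color classes nonempty,
has exactly `t!` proper colorings. -/
lemma perm_count {U : Type} [Fintype U] {t α : ℕ} (hα : 0 < α)
    (A : U → U → Prop) (c : U → Fin t)
    (hstruct : ∀ u v, A u v ↔ c u ≠ c v)
    (hfib : ∀ i, Fintype.card {v // c v = i} = α) :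
    Nat.card {d : U → Fin t // ∀ u v, A u v → d u ≠ d v} = Nat.factorial t := by
  have hfibne : ∀ i : Fin t, ∃ v, c v = i := by
    intro i
    have : 0 < Fintype.card {v // c v = i} := by rw [hfib]; exact hα
    obtain ⟨⟨v, hv⟩⟩ := Fintype.card_pos_iff.mp this
    exact ⟨v, hv⟩
  set w : Fin t → U := fun i => Classical.choose (hfibne i) with hw
  have hwc : ∀ i, c (w i) = i := fun i => Classical.choose_spec (hfibne i)
  have Ψprop : ∀ (σ : Equiv.Perm (Fin t)) u v, A u v → σ (c u) ≠ σ (c v) := by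
    intro σ u v hA h
    exact (hstruct u v).mp hA (σ.injective h)
  set Ψ : Equiv.Perm (Fin t) → {d : U → Fin t // ∀ u v, A u v → d u ≠ d v} :=
    fun σ => ⟨fun v => σ (c v), Ψprop σ⟩ with hΨ
  have hbij : Function.Bijective Ψ := by
    constructor
    · intro σ σ' h
      apply Equiv.ext
      intro i
      have h2 := congrArg (fun d => d.1 (w i)) h
      simpa [hΨ, hwc] using h2
    · rintro ⟨d, hd⟩
      set τ : Fin t → Fin t := fun i => d (w i) with hτ
      have τinj : Function.Injective τ := by
        intro i j hij
        by_contra hne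
        exact hd (w i) (w j) ((hstruct _ _).mpr (by rw [hwc, hwc]; exact hne)) hij
      have τbij := Finite.injective_iff_bijective.mp τinj
      have hval : ∀ v, d v = τ (c v) := by
        intro v
        obtain ⟨j, hj⟩ := τbij.2 (d v)
        rcases eq_or_ne j (c v) with rfl | hne
        · exact hj.symm
        · exfalso
          have hA : A v (w j) := (hstruct _ _).mpr (by rw [hwc]; exact fun h => hne h.symm)
          exact hd v (w j) hA (by exact hj.symm)
      refine ⟨Equiv.ofBijective τ τbij, ?_⟩
      apply Subtype.ext
      funext v
      exact (hval v).symm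
  rw [← Nat.card_congr (Equiv.ofBijective Ψ hbij), Nat.card_eq_fintype_card,
    Fintype.card_perm, Fintype.card_fin]

lemma walk_const {V : Type} {G : SimpleGraph V} {k t : ℕ}
    {f : V → Fin k × Fin t} (hf : ∀ u v, G.Adj u v → (kKt k t).Adj (f u) (f v)) :
    ∀ {u v : V}, G.Walk u v → (f u).1 = (f v).1 := by
  intro u v p
  induction p with
  | nil => rfl
  | cons h p ih => exact ((hf _ _ h).1).trans ih

/-- Decomposition of homomorphisms to `kKt` over connected components. -/
lemma hom_decomp {V : Type} [Fintype V] (G : SimpleGraph V) (k t : ℕ)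
    [Fintype G.ConnectedComponent] :
    homCount G (kKt k t).Adj =
      ∏ P : G.ConnectedComponent,
        (k * Nat.card {c : P.supp → Fin t //
          ∀ u v : P.supp, G.Adj u.1 v.1 → c u ≠ c v}) := by
  have memself : ∀ v : V, v ∈ (G.connectedComponentMk v).supp :=
    fun v => (ConnectedComponent.mem_supp_iff _ _).mpr rfl
  set T := fun P : G.ConnectedComponent =>
    {c : P.supp → Fin t // ∀ u v : P.supp, G.Adj u.1 v.1 → c u ≠ c v} with hT
  have tr : ∀ (F : ∀ P : G.ConnectedComponent, Fin k × T P) (u : V)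
      (P : G.ConnectedComponent) (hm : u ∈ P.supp),
      (F P).2.1 ⟨u, hm⟩ = (F (G.connectedComponentMk u)).2.1 ⟨u, memself u⟩ := by
    intro F u P hm
    have h : G.connectedComponentMk u = P := (ConnectedComponent.mem_supp_iff _ _).mp hm
    subst h
    rfl
  set Φ : (∀ P : G.ConnectedComponent, Fin k × T P) →
      {f : V → Fin k × Fin t // ∀ u v, G.Adj u v → (kKt k t).Adj (f u) (f v)} :=
    fun F => ⟨fun v => ((F (G.connectedComponentMk v)).1,
      (F (G.connectedComponentMk v)).2.1 ⟨v, memself v⟩), by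
      intro u v huv
      have hmk : G.connectedComponentMk u = G.connectedComponentMk v :=
        ConnectedComponent.sound huv.reachable
      refine ⟨congrArg (fun P => (F P).1) hmk, ?_⟩
      have hmv : v ∈ (G.connectedComponentMk u).supp := by
        rw [ConnectedComponent.mem_supp_iff]; exact hmk.symm
      show (F (G.connectedComponentMk u)).2.1 ⟨u, memself u⟩ ≠
        (F (G.connectedComponentMk v)).2.1 ⟨v, memself v⟩
      rw [← tr F v (G.connectedComponentMk u) hmv]
      exact (F (G.connectedComponentMk u)).2.2 ⟨u, memself u⟩ ⟨v, hmv⟩ huv⟩ with hΦ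
  have hbij : Function.Bijective Φ := by
    constructor
    · intro F F' h
      have hval := congrArg Subtype.val h
      funext P
      induction P using SimpleGraph.ConnectedComponent.ind with
      | _ v0 =>
        have h1 : (F (G.connectedComponentMk v0)).1 = (F' (G.connectedComponentMk v0)).1 :=
          congrArg (fun g => (g v0).1) hval
        refine Prod.ext h1 ?_
        apply Subtype.ext
        funext x
        obtain ⟨u, hu⟩ := x
        rw [tr F u _ hu, tr F' u _ hu]
        exact congrArg (fun g => (g u).2) hval
    · rintro ⟨f, hf⟩
      have hlift : ∀ (v w : V) (p : G.Walk v w), p.IsPath → (f v).1 = (f w).1 :=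
        fun v w p _ => walk_const hf p
      set g : G.ConnectedComponent → Fin k :=
        ConnectedComponent.lift (fun v => (f v).1) hlift with hg
      refine ⟨fun P => (g P, ⟨fun x => (f x.1).2, fun u v h => (hf u.1 v.1 h).2⟩), ?_⟩
      apply Subtype.ext
      funext v
      rfl
  rw [homCount, ← Nat.card_congr (Equiv.ofBijective Φ hbij)]
  rw [Nat.card_pi]
  congr 1
  funext P
  rw [Nat.card_prod, Nat.card_eq_fintype_card, Fintype.card_fin]

lemma homCount_congr {V V' W : Type} (G : SimpleGraph V) (G' : SimpleGraph V')
    (H : W → W → Prop) (e : G ≃g G') : homCount G H = homCount G' H := by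
  apply Nat.card_congr
  refine ⟨fun f => ⟨f.1 ∘ e.symm, fun u v h => f.2 _ _ (e.symm.map_adj_iff.mpr h)⟩,
    fun f => ⟨f.1 ∘ e, fun u v h => f.2 _ _ (e.map_adj_iff.mpr h)⟩, ?_, ?_⟩
  · intro f; apply Subtype.ext; funext v; simp
  · intro f; apply Subtype.ext; funext v; simp

lemma mTuran_count (m t α k : ℕ) (ht : 3 ≤ t) (hα : 0 < α) :
    homCount (mTuran m t α) (kKt k t).Adj = (Nat.factorial t * k) ^ m := by
  have ht0 : 0 < t := by omega
  set p0 : Fin t := ⟨0, by omega⟩ with hp0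
  set p1 : Fin t := ⟨1, by omega⟩ with hp1
  have hne01 : p0 ≠ p1 := by simp [hp0, hp1, Fin.ext_iff]
  set a0 : Fin α := ⟨0, hα⟩ with ha0
  set Φ : (Fin m → Fin k × Equiv.Perm (Fin t)) →
      {f : Fin m × Fin t × Fin α → Fin k × Fin t //
        ∀ u v, (mTuran m t α).Adj u v → (kKt k t).Adj (f u) (f v)} :=
    fun g => ⟨fun x => ((g x.1).1, (g x.1).2 x.2.1), by
      rintro ⟨i, p, a⟩ ⟨j, q, b⟩ ⟨hij, hpq⟩
      cases hij
      exact ⟨rfl, fun h => hpq ((g i).2.injective h)⟩⟩ with hΦ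
  have hbij : Function.Bijective Φ := by
    constructor
    · intro g g' h
      have hval := congrArg Subtype.val h
      funext i
      refine Prod.ext (congrArg (fun F => (F (i, p0, a0)).1) hval) ?_
      apply Equiv.ext
      intro p
      exact congrArg (fun F => (F (i, p, a0)).2) hval
    · rintro ⟨f, hf⟩
      have step : ∀ (i : Fin m) (p q : Fin t) (a b : Fin α), p ≠ q →
          (f (i,p,a)).1 = (f (i,q,b)).1 ∧ (f (i,p,a)).2 ≠ (f (i,q,b)).2 :=
        fun i p q a b h => hf _ _ ⟨rfl, h⟩
      have hconst : ∀ (i : Fin m) (p : Fin t) (a : Fin α),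
          (f (i,p,a)).1 = (f (i,p0,a0)).1 := by
        intro i p a
        by_cases hp : p = p0
        · subst hp
          exact ((step i p0 p1 a a0 hne01).1).trans (step i p1 p0 a0 a0 hne01.symm).1
        · exact (step i p p0 a a0 hp).1
      have τbij : ∀ i : Fin m, Function.Bijective (fun p => (f (i,p,a0)).2) := by
        intro i
        apply Finite.injective_iff_bijective.mp
        intro p q hpq
        by_contra hne
        exact (step i p q a0 a0 hne).2 hpq
      have hval2 : ∀ (i : Fin m) (p : Fin t) (a : Fin α),
          (f (i,p,a)).2 = (f (i,p,a0)).2 := by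
        intro i p a
        obtain ⟨q, hq⟩ := (τbij i).2 (f (i,p,a)).2
        rcases eq_or_ne q p with rfl | hne
        · exact hq.symm
        · exfalso
          exact (step i p q a a0 hne.symm).2 (by exact hq.symm)
      refine ⟨fun i => ((f (i,p0,a0)).1, Equiv.ofBijective _ (τbij i)), ?_⟩
      apply Subtype.ext
      funext x
      obtain ⟨i, p, a⟩ := x
      exact Prod.ext (hconst i p a).symm (hval2 i p a).symm
  rw [homCount, ← Nat.card_congr (Equiv.ofBijective Φ hbij), Nat.card_fun,
    Nat.card_prod, Nat.card_eq_fintype_card, Fintype.card_fin,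
    Nat.card_eq_fintype_card (α := Equiv.Perm (Fin t)), Fintype.card_perm, Fintype.card_fin,
    Nat.card_eq_fintype_card, Fintype.card_fin, mul_comm k]

lemma build_iso {V : Type} [Fintype V] (G : SimpleGraph V) (m t α : ℕ)
    [Fintype G.ConnectedComponent] (c : V → Fin t)
    (hadj : ∀ u v, G.Adj u v ↔
      (G.connectedComponentMk u = G.connectedComponentMk v ∧ c u ≠ c v))
    (hJ : Fintype.card G.ConnectedComponent = m)
    (hfib : ∀ (P : G.ConnectedComponent) (i : Fin t),
      Fintype.card {v : V // G.connectedComponentMk v = P ∧ c v = i} = α) :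
    Nonempty (G ≃g mTuran m t α) := by
  set ε : G.ConnectedComponent ≃ Fin m := Fintype.equivFinOfCardEq hJ with hε
  set F : V → Fin m × Fin t := fun v => (ε (G.connectedComponentMk v), c v) with hF
  have hFib : ∀ y : Fin m × Fin t, Fintype.card {v // F v = y} = α := by
    intro y
    have e : {v // F v = y} ≃ {v : V // G.connectedComponentMk v = ε.symm y.1 ∧ c v = y.2} := by
      apply Equiv.subtypeEquivRight
      intro v
      simp only [hF, Prod.ext_iff]
      constructor
      · rintro ⟨h1, h2⟩
        exact ⟨by rw [← h1]; simp, h2⟩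
      · rintro ⟨h1, h2⟩
        exact ⟨by rw [h1]; simp, h2⟩
    rw [Fintype.card_congr e, hfib]
  have η : ∀ y : Fin m × Fin t, {v // F v = y} ≃ Fin α :=
    fun y => Fintype.equivFinOfCardEq (hFib y)
  set e1 : V ≃ Σ y : Fin m × Fin t, {v // F v = y} :=
    ⟨fun v => ⟨F v, v, rfl⟩, fun x => x.2.1, fun v => rfl, by rintro ⟨y, v, rfl⟩; rfl⟩ with he1
  set φ : V ≃ Fin m × Fin t × Fin α :=
    e1.trans (((Equiv.sigmaCongrRight η).trans
      (Equiv.sigmaEquivProd (Fin m × Fin t) (Fin α))).trans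
      (Equiv.prodAssoc (Fin m) (Fin t) (Fin α))) with hφ
  have hφ1 : ∀ v, (φ v).1 = ε (G.connectedComponentMk v) := fun v => rfl
  have hφ2 : ∀ v, (φ v).2.1 = c v := fun v => rfl
  refine ⟨⟨φ, ?_⟩⟩
  intro u v
  show (mTuran m t α).Adj (φ u) (φ v) ↔ G.Adj u v
  rw [hadj u v]
  show ((φ u).1 = (φ v).1 ∧ (φ u).2.1 ≠ (φ v).2.1) ↔ _
  rw [hφ1, hφ1, hφ2, hφ2, EmbeddingLike.apply_eq_iff_eq]

end Auxiliary

set_option maxHeartbeats 1000000 in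
theorem stmt12 (δ t α : ℕ) (hδ : 3 ≤ δ) (ht3 : 3 ≤ t) (htδ : t ≤ δ)
    (hα : δ = (t - 1) * α) :
    ∃ k₀ : ℕ, ∀ k ≥ k₀, ∀ m : ℕ, ∀ (V : Type) [Fintype V], ∀ G : SimpleGraph V,
      Fintype.card V = m * t * α → (∀ v, δ ≤ nDeg G v) →
      homCount G (kKt k t).Adj ≤ (Nat.factorial t * k) ^ m ∧
      homCount (mTuran m t α) (kKt k t).Adj = (Nat.factorial t * k) ^ m ∧
      (homCount G (kKt k t).Adj = (Nat.factorial t * k) ^ m ↔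
        Nonempty (G ≃g mTuran m t α)) := by
  have hα0 : 0 < α := by
    rcases Nat.eq_zero_or_pos α with h | h
    · rw [h, mul_zero] at hα; omega
    · exact h
  have ht1 : 1 ≤ t := by omega
  have htα : 1 ≤ t * α := Nat.mul_pos (by omega) hα0
  refine ⟨t ^ ((t * α) * (t * α + 1)) + 1, ?_⟩
  intro k hk m V _ G hcard hdeg
  have hk1 : 1 ≤ k := by
    have : 0 < t ^ ((t * α) * (t * α + 1)) + 1 := Nat.succ_pos _
    omega
  have hkineq : t ^ ((t * α) * (t * α + 1)) < k := by omega
  haveI : Fintype G.ConnectedComponent := Fintype.ofFinite _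
  have hmT := mTuran_count m t α k ht3 hα0
  have hfac1 : 1 ≤ Nat.factorial t := Nat.factorial_pos t
  have hRHSpos : 0 < (Nat.factorial t * k) ^ m :=
    Nat.pow_pos (Nat.mul_pos hfac1 hk1)
  have main : homCount G (kKt k t).Adj < (Nat.factorial t * k) ^ m ∨
      (homCount G (kKt k t).Adj = (Nat.factorial t * k) ^ m ∧
        Nonempty (G ≃g mTuran m t α)) := by
    by_cases hcol : Nonempty {d : V → Fin t // ∀ u v, G.Adj u v → d u ≠ d v}
    swap
    · left
      have h0 : homCount G (kKt k t).Adj = 0 := by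
        haveI : IsEmpty {f : V → Fin k × Fin t //
            ∀ u v, G.Adj u v → (kKt k t).Adj (f u) (f v)} :=
          ⟨fun f => hcol ⟨⟨fun v => (f.1 v).2, fun u v h => (f.2 u v h).2⟩⟩⟩
        rw [homCount]
        exact Nat.card_of_isEmpty
      rw [h0]
      exact hRHSpos
    obtain ⟨c, hc⟩ := hcol
    set n : G.ConnectedComponent → ℕ := fun P => Fintype.card P.supp with hn
    set C : G.ConnectedComponent → ℕ := fun P =>
      Nat.card {d : P.supp → Fin t // ∀ u v : P.supp, G.Adj u.1 v.1 → d u ≠ d v} with hC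
    have hdecomp : homCount G (kKt k t).Adj = ∏ P, (k * C P) := hom_decomp G k t
    have hmem : ∀ v : V, v ∈ (G.connectedComponentMk v).supp := fun v =>
      (ConnectedComponent.mem_supp_iff _ _).mpr rfl
    have hsumn : ∑ P, n P = m * (t * α) := by
      have e0 : V ≃ Σ P : G.ConnectedComponent, P.supp := by
        refine (Equiv.sigmaFiberEquiv G.connectedComponentMk).symm.trans ?_
        apply Equiv.sigmaCongrRight
        intro P
        exact Equiv.subtypeEquivRight
          (fun v => (ConnectedComponent.mem_supp_iff _ _).symm)
      calc ∑ P, n P = Fintype.card (Σ P : G.ConnectedComponent, P.supp) :=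
            Fintype.card_sigma.symm
        _ = Fintype.card V := (Fintype.card_congr e0).symm
        _ = m * (t * α) := by rw [hcard, mul_assoc]
    have hP : ∀ P : G.ConnectedComponent, t * α ≤ n P ∧ (n P = t * α →
        (∀ u v : P.supp, G.Adj u.1 v.1 ↔ c u.1 ≠ c v.1) ∧
        ∀ i : Fin t, Fintype.card {x : P.supp // c x.1 = i} = α) := by
      intro P
      haveI : Nonempty P.supp := by
        induction P using SimpleGraph.ConnectedComponent.ind with
        | _ v => exact ⟨⟨v, hmem v⟩⟩
      have hmemadj : ∀ (x : P.supp) (w : V), G.Adj x.1 w → w ∈ P.supp := by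
        intro x w hw
        rw [ConnectedComponent.mem_supp_iff]
        have h1 : G.connectedComponentMk x.1 = P :=
          (ConnectedComponent.mem_supp_iff _ _).mp x.2
        rw [← h1]
        exact (ConnectedComponent.sound hw.reachable).symm
      have hdegP : ∀ x : P.supp, (t - 1) * α ≤ Nat.card {w : P.supp // G.Adj x.1 w.1} := by
        intro x
        have e : {w : V // G.Adj x.1 w} ≃ {w : P.supp // G.Adj x.1 w.1} :=
          ⟨fun w => ⟨⟨w.1, hmemadj x w.1 w.2⟩, w.2⟩, fun w => ⟨w.1.1, w.2⟩,
            fun _ => rfl, fun _ => rfl⟩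
        rw [← Nat.card_congr e, ← hα]
        exact hdeg x.1
      exact size_lemma (by omega) hα0 (fun x y : P.supp => G.Adj x.1 y.1) (fun x => c x.1)
        (fun u v h => hc u.1 v.1 h) hdegP
    set S := Finset.univ.filter (fun P => n P = t * α) with hS
    set B := Finset.univ.filter (fun P => ¬ n P = t * α) with hB
    set e := S.card with he
    have hCS : ∀ P ∈ S, k * C P = k * Nat.factorial t := by
      intro P hPS
      have hnP : n P = t * α := (Finset.mem_filter.mp hPS).2
      obtain ⟨hstr, hfib⟩ := (hP P).2 hnP
      congr 1
      exact perm_count hα0 _ _ hstr hfib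
    have hprodS : ∏ P ∈ S, (k * C P) = (k * Nat.factorial t) ^ e := by
      rw [Finset.prod_congr rfl hCS, Finset.prod_const, he]
    have hsumS : ∑ P ∈ S, n P = e * (t * α) := by
      rw [Finset.sum_congr rfl (fun P hPS => (Finset.mem_filter.mp hPS).2),
        Finset.sum_const, smul_eq_mul, he]
    have hsplit : ∑ P ∈ S, n P + ∑ P ∈ B, n P = m * (t * α) := by
      rw [hS, hB, Finset.sum_filter_add_sum_filter_not, hsumn]
    have hem : e ≤ m := by
      have h1 : e * (t * α) ≤ m * (t * α) := by omega
      exact Nat.le_of_mul_le_mul_right h1 (by omega)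
    have hsumB : ∑ P ∈ B, n P = (m - e) * (t * α) := by
      rw [Nat.sub_mul]
      omega
    by_cases hBe : B = ∅
    · right
      have hall : ∀ P, n P = t * α := by
        intro P
        by_contra hne
        have : P ∈ B := Finset.mem_filter.mpr ⟨Finset.mem_univ _, hne⟩
        rw [hBe] at this
        exact absurd this (Finset.notMem_empty _)
      have hSuniv : S = Finset.univ := by
        rw [hS]
        exact Finset.filter_true_of_mem (fun P _ => hall P)
      have hemm : e = m := by
        have h2 : ∑ P ∈ B, n P = 0 := by rw [hBe, Finset.sum_empty]
        have h3 : e * (t * α) = m * (t * α) := by omega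
        exact Nat.eq_of_mul_eq_mul_right (by omega) h3
      have heq : homCount G (kKt k t).Adj = (Nat.factorial t * k) ^ m := by
        calc homCount G (kKt k t).Adj = ∏ P, (k * C P) := hdecomp
          _ = (∏ P ∈ S, (k * C P)) * (∏ P ∈ B, (k * C P)) := by
            rw [hS, hB, Finset.prod_filter_mul_prod_filter_not]
          _ = (Nat.factorial t * k) ^ m := by
            rw [hprodS, hBe, Finset.prod_empty, mul_one, hemm, mul_comm k]
      refine ⟨heq, ?_⟩
      have hadj : ∀ u v, G.Adj u v ↔
          (G.connectedComponentMk u = G.connectedComponentMk v ∧ c u ≠ c v) := by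
        intro u v
        constructor
        · intro h
          exact ⟨ConnectedComponent.sound h.reachable, hc u v h⟩
        · rintro ⟨hmk, hne⟩
          have hstr := ((hP (G.connectedComponentMk u)).2 (hall _)).1
          exact (hstr ⟨u, hmem u⟩
            ⟨v, by rw [ConnectedComponent.mem_supp_iff]; exact hmk.symm⟩).mpr hne
      have hcardJ : Fintype.card G.ConnectedComponent = m := by
        rw [← hemm, he, hSuniv, Finset.card_univ]
      apply build_iso G m t α c hadj hcardJ
      intro P i
      have hfib := ((hP P).2 (hall P)).2 i
      have e2 : {v : V // G.connectedComponentMk v = P ∧ c v = i} ≃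
          {x : P.supp // c x.1 = i} :=
        ⟨fun v => ⟨⟨v.1, (ConnectedComponent.mem_supp_iff _ _).mpr v.2.1⟩, v.2.2⟩,
         fun x => ⟨x.1.1, (ConnectedComponent.mem_supp_iff _ _).mp x.1.2, x.2⟩,
         fun _ => rfl, fun _ => rfl⟩
      rw [Fintype.card_congr e2, hfib]
    · left
      set b := B.card with hb
      have hbpos : 0 < b := Finset.card_pos.mpr (Finset.nonempty_of_ne_empty hBe)
      have hBn : ∀ P ∈ B, t * α + 1 ≤ n P := by
        intro P hPB
        have h1 := (hP P).1
        have h2 := (Finset.mem_filter.mp hPB).2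
        omega
      have hsumBge : b * (t * α + 1) ≤ ∑ P ∈ B, n P := by
        have := Finset.card_nsmul_le_sum B n (t * α + 1) hBn
        rwa [smul_eq_mul] at this
      set M := m - e with hM
      have hMtb : b * (t * α + 1) ≤ M * (t * α) := by
        rw [← hsumB]
        exact hsumBge
      have hM1 : 1 ≤ M := by
        by_contra h
        push_neg at h
        have hM0 : M = 0 := by omega
        rw [hM0, zero_mul] at hMtb
        have : 1 * (t * α + 1) ≤ b * (t * α + 1) := Nat.mul_le_mul_right _ hbpos
        omega
      have hCle : ∀ P ∈ B, k * C P ≤ k * t ^ (n P) := by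
        intro P _
        apply Nat.mul_le_mul_left
        calc C P ≤ Nat.card (P.supp → Fin t) :=
              Nat.card_le_card_of_injective Subtype.val Subtype.val_injective
          _ = t ^ (n P) := by
            rw [Nat.card_fun, Nat.card_eq_fintype_card, Fintype.card_fin,
              Nat.card_eq_fintype_card]
      have hprodB : ∏ P ∈ B, (k * C P) ≤ k ^ b * t ^ (M * (t * α)) := by
        calc ∏ P ∈ B, (k * C P) ≤ ∏ P ∈ B, (k * t ^ (n P)) :=
              Finset.prod_le_prod (fun i _ => Nat.zero_le _) hCle
          _ = (∏ _P ∈ B, k) * ∏ P ∈ B, t ^ (n P) := Finset.prod_mul_distrib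
          _ = k ^ b * t ^ (∑ P ∈ B, n P) := by
            rw [Finset.prod_const, Finset.prod_pow_eq_pow_sum]
          _ = k ^ b * t ^ (M * (t * α)) := by rw [hsumB]
      have hkey : k ^ b * t ^ (M * (t * α)) < k ^ M :=
        keyineq t (t * α) M b k ht1 hMtb hM1 hkineq
      have hposS : 0 < (k * Nat.factorial t) ^ e :=
        Nat.pow_pos (Nat.mul_pos hk1 hfac1)
      calc homCount G (kKt k t).Adj
          = (∏ P ∈ S, (k * C P)) * (∏ P ∈ B, (k * C P)) := by
            rw [hdecomp, hS, hB, Finset.prod_filter_mul_prod_filter_not]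
        _ ≤ (k * Nat.factorial t) ^ e * (k ^ b * t ^ (M * (t * α))) := by
            rw [hprodS]
            exact Nat.mul_le_mul_left _ hprodB
        _ < (k * Nat.factorial t) ^ e * k ^ M := mul_lt_mul_of_pos_left hkey hposS
        _ ≤ (k * Nat.factorial t) ^ e * (Nat.factorial t * k) ^ M := by
            apply Nat.mul_le_mul_left
            apply Nat.pow_le_pow_left
            calc k = 1 * k := (one_mul k).symm
              _ ≤ Nat.factorial t * k := Nat.mul_le_mul_right _ hfac1
        _ = (Nat.factorial t * k) ^ m := by
            rw [mul_comm k (Nat.factorial t), ← pow_add]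
            congr 1
            omega
  rcases main with h | ⟨h, hiso⟩
  · refine ⟨h.le, hmT, ⟨fun he => absurd he (Nat.ne_of_lt h), fun hiso => ?_⟩⟩
    obtain ⟨isoE⟩ := hiso
    rw [homCount_congr _ _ _ isoE]
    exact hmT
  · exact ⟨h.le, hmT, ⟨fun _ => hiso, fun _ => h⟩⟩
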